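/- For a fixed binary string x of length m and n ≥ m, the number of strings y ∈ {0,1}^n whose canonical (lexicographically first) embedding of x ends at position n equals binomial(n−1, m−1); in particular it is independent of the form of x. -/

import Mathlib

/-- `f` is an embedding of `x` into `y` as a subsequence: a strictly monotone
choice of indices along which `y` restricts to `x`. -/
def IsEmbedding {m n : ℕ} (x : Fin m → Bool) (y : Fin n → Bool) (f : Fin m → Fin n) : Prop :=
  StrictMono f ∧ ∀ i, y (f i) = x i

/-- `f` is the canonical (lexicographically first) embedding of `x` into `y`:
for any other embedding `g`, `f` is lexicographically strictly earlier. -/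
def IsInitialEmbedding {m n : ℕ} (x : Fin m → Bool) (y : Fin n → Bool)
    (f : Fin m → Fin n) : Prop :=
  IsEmbedding x y f ∧
    ∀ g : Fin m → Fin n, IsEmbedding x y g → g ≠ f →
      ∃ r : Fin m, (∀ j : Fin m, j < r → f j = g j) ∧ f r < g r

/-- Gap condition: no position strictly before `f i` (but after all earlier chosen
positions) carries the letter `x i`. -/
def SubGap {m n : ℕ} (x : Fin m → Bool) (y : Fin n → Bool) (f : Fin m → Fin n) : Prop :=
  ∀ i : Fin m, ∀ j : Fin n, (∀ k : Fin m, k < i → f k < j) → j < f i → y j ≠ x i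

lemma bool_ne_iff (a b : Bool) : a ≠ b ↔ a = !b := by cases a <;> cases b <;> simp

lemma initial_unique {m n : ℕ} {x : Fin m → Bool} {y : Fin n → Bool} {f g : Fin m → Fin n}
    (hf : IsInitialEmbedding x y f) (hg : IsInitialEmbedding x y g) : f = g := by
  by_contra h
  obtain ⟨r, hr1, hr2⟩ := hf.2 g hg.1 (Ne.symm h)
  obtain ⟨r', hr1', hr2'⟩ := hg.2 f hf.1 h
  rcases lt_trichotomy r r' with hl | rfl | hl
  · exact absurd (hr1' r hl).symm (ne_of_lt hr2)
  · exact absurd (hr2.trans hr2') (lt_irrefl _)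
  · exact absurd (hr1 r' hl) (ne_of_lt hr2').symm

lemma initial_of_gap {m n : ℕ} {x : Fin m → Bool} {y : Fin n → Bool} {f : Fin m → Fin n}
    (hemb : IsEmbedding x y f) (hgap : SubGap x y f) : IsInitialEmbedding x y f := by
  classical
  refine ⟨hemb, fun g hg hne => ?_⟩
  have hS : (Finset.univ.filter fun i => f i ≠ g i).Nonempty := by
    obtain ⟨a, ha⟩ := Function.ne_iff.1 (Ne.symm hne)
    exact ⟨a, Finset.mem_filter.2 ⟨Finset.mem_univ _, ha⟩⟩
  set r := (Finset.univ.filter fun i => f i ≠ g i).min' hS with hr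
  have hrne : f r ≠ g r := (Finset.mem_filter.1 (Finset.min'_mem _ hS)).2
  have hagree : ∀ j, j < r → f j = g j := by
    intro j hj
    by_contra hne'
    exact absurd (Finset.min'_le _ j (Finset.mem_filter.2 ⟨Finset.mem_univ _, hne'⟩))
      (not_le.2 hj)
  refine ⟨r, hagree, ?_⟩
  rcases lt_or_gt_of_ne hrne with h | h
  · exact h
  · exact absurd (hg.2 r) (hgap r (g r) (fun k hk => (hagree k hk) ▸ (hg.1 hk)) h)

lemma gap_of_initial {m n : ℕ} {x : Fin m → Bool} {y : Fin n → Bool} {f : Fin m → Fin n}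
    (hf : IsInitialEmbedding x y f) : SubGap x y f := by
  classical
  intro i j hk hj hyx
  set g : Fin m → Fin n := Function.update f i j with hgdef
  have hgi : g i = j := Function.update_self i j f
  have hgo : ∀ k, k ≠ i → g k = f k := fun k hk' => Function.update_of_ne hk' j f
  have hmono : StrictMono g := by
    intro a b hab
    rcases eq_or_ne a i with rfl | ha
    · rw [hgi, hgo b (ne_of_gt hab)]
      exact hj.trans_le (hf.1.1.monotone hab.le)
    · rcases eq_or_ne b i with rfl | hb
      · rw [hgi, hgo a ha]
        exact hk a hab
      · rw [hgo a ha, hgo b hb]; exact hf.1.1 hab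
  have hemb : IsEmbedding x y g := by
    refine ⟨hmono, fun k => ?_⟩
    rcases eq_or_ne k i with rfl | hk'
    · rw [hgi]; exact hyx
    · rw [hgo k hk']; exact hf.1.2 k
  have hne : g ≠ f := fun h => hj.ne (by rw [← hgi]; exact congrFun h i)
  obtain ⟨r, hr1, hr2⟩ := hf.2 g hemb hne
  rcases lt_trichotomy r i with h | rfl | h
  · rw [hgo r (ne_of_lt h)] at hr2; exact lt_irrefl _ hr2
  · rw [hgi] at hr2; exact absurd (hr2.trans hj) (lt_irrefl _)
  · have h2 := hr1 i h
    rw [hgi] at h2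
    exact hj.ne' h2

lemma existsUnique_y {m n : ℕ} (x : Fin m → Bool) (f : Fin m → Fin n)
    (hf : StrictMono f) (hcov : ∀ j : Fin n, ∃ i : Fin m, j ≤ f i) :
    ∃! y : Fin n → Bool, IsEmbedding x y f ∧ SubGap x y f := by
  classical
  have key : ∀ j : Fin n, ∃ i : Fin m, j ≤ f i ∧ ∀ k : Fin m, k < i → f k < j := by
    intro j
    obtain ⟨i0, hi0⟩ := hcov j
    have hS : (Finset.univ.filter fun i => j ≤ f i).Nonempty :=
      ⟨i0, Finset.mem_filter.2 ⟨Finset.mem_univ _, hi0⟩⟩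
    refine ⟨(Finset.univ.filter fun i => j ≤ f i).min' hS,
      (Finset.mem_filter.1 (Finset.min'_mem _ hS)).2, fun k hk => ?_⟩
    by_contra hle
    have hmem : k ∈ Finset.univ.filter fun i => j ≤ f i :=
      Finset.mem_filter.2 ⟨Finset.mem_univ _, not_lt.1 hle⟩
    have hmin := Finset.min'_le _ k hmem
    exact absurd hmin (not_le.2 hk)
  choose idx h1 h2 using key
  have h3 : ∀ i, idx (f i) = i := by
    intro i
    rcases lt_trichotomy (idx (f i)) i with h | h | h
    · exact absurd (h1 (f i)) (not_le.2 (hf h))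
    · exact h
    · exact absurd (h2 (f i) i h) (lt_irrefl _)
  set Y : Fin n → Bool := fun j => if f (idx j) = j then x (idx j) else !(x (idx j)) with hYdef
  have hidxeq : ∀ (i : Fin m) (j : Fin n), (∀ k : Fin m, k < i → f k < j) → j < f i →
      idx j = i := by
    intro i j hk hj
    rcases lt_trichotomy (idx j) i with h | h | h
    · exact absurd (h1 j) (not_le.2 (hk _ h))
    · exact h
    · exact absurd (h2 j i h) (not_lt.2 hj.le)
  refine ⟨Y, ⟨⟨hf, ?_⟩, ?_⟩, ?_⟩
  · intro i; simp [hYdef, h3]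
  · intro i j hk hj
    have hij : idx j = i := hidxeq i j hk hj
    show (if f (idx j) = j then x (idx j) else !(x (idx j))) ≠ x i
    rw [hij, if_neg hj.ne']
    cases x i <;> simp
  · rintro y' ⟨hemb', hgap'⟩
    funext j
    show y' j = if f (idx j) = j then x (idx j) else !(x (idx j))
    by_cases hc : f (idx j) = j
    · rw [if_pos hc, ← hemb'.2 (idx j), hc]
    · rw [if_neg hc]
      have hlt : j < f (idx j) := lt_of_le_of_ne (h1 j) (Ne.symm hc)
      exact (bool_ne_iff _ _).1 (hgap' (idx j) j (h2 j) hlt)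

lemma card_strictMono_fin (k N : ℕ) :
    Nat.card {g : Fin k → Fin N // StrictMono g} = N.choose k := by
  classical
  have e : {g : Fin k → Fin N // StrictMono g} ≃ {s : Finset (Fin N) // s.card = k} :=
    { toFun := fun g => ⟨Finset.univ.image g.1, by
        rw [Finset.card_image_of_injective _ g.2.injective, Finset.card_univ, Fintype.card_fin]⟩
      invFun := fun s => ⟨⇑(s.1.orderEmbOfFin s.2), (s.1.orderEmbOfFin s.2).strictMono⟩
      left_inv := fun g => Subtype.ext
        ((Finset.orderEmbOfFin_unique _
          (fun i => Finset.mem_image_of_mem _ (Finset.mem_univ i)) g.2).symm)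
      right_inv := fun s => Subtype.ext (by
        rw [← Finset.coe_inj, Finset.coe_image, Finset.coe_univ, Set.image_univ,
          Finset.range_orderEmbOfFin]) }
  rw [Nat.card_congr e, Nat.card_eq_fintype_card, Fintype.card_finset_len, Fintype.card_fin]

lemma card_last_fixed (m n : ℕ) (hm : 1 ≤ m) (hmn : m ≤ n) :
    Nat.card {f : Fin m → Fin n // StrictMono f ∧ (f ⟨m - 1, Nat.sub_lt hm Nat.one_pos⟩ : ℕ) = n - 1} =
      (n - 1).choose (m - 1) := by
  classical
  rw [← card_strictMono_fin (m - 1) (n - 1)]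
  refine (Nat.card_congr (Equiv.ofBijective
    (fun g : {g : Fin (m - 1) → Fin (n - 1) // StrictMono g} =>
      (⟨fun i => if h : (i : ℕ) < m - 1 then Fin.castLE (by omega) (g.1 ⟨i, h⟩)
          else ⟨n - 1, by omega⟩, ?_, ?_⟩ :
        {f : Fin m → Fin n // StrictMono f ∧ (f ⟨m - 1, by omega⟩ : ℕ) = n - 1}))
    ⟨?_, ?_⟩)).symm
  · -- StrictMono
    intro a b hab
    have hab' : (a : ℕ) < (b : ℕ) := hab
    by_cases hb : (b : ℕ) < m - 1
    · have ha : (a : ℕ) < m - 1 := lt_trans hab' hb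
      simp only [dif_pos ha, dif_pos hb, Fin.lt_def, Fin.coe_castLE]
      exact g.2 (show (⟨(a : ℕ), ha⟩ : Fin (m - 1)) < ⟨(b : ℕ), hb⟩ from hab')
    · have ha : (a : ℕ) < m - 1 := by have := b.isLt; omega
      simp only [dif_pos ha, dif_neg hb, Fin.lt_def, Fin.coe_castLE]
      exact (g.1 ⟨(a : ℕ), ha⟩).isLt
  · -- last value
    simp only [dif_neg (lt_irrefl (m - 1))]
  · -- injective
    rintro ⟨g1, hg1⟩ ⟨g2, hg2⟩ hb
    have hb' := congrArg Subtype.val hb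
    simp only at hb'
    refine Subtype.ext (funext fun i => ?_)
    have := congrFun hb' ⟨(i : ℕ), by omega⟩
    simp only [dif_pos i.isLt] at this
    have hv : ((g1 ⟨(i : ℕ), i.isLt⟩ : Fin (n - 1)) : ℕ) =
        ((g2 ⟨(i : ℕ), i.isLt⟩ : Fin (n - 1)) : ℕ) := by
      have := congrArg Fin.val this
      simpa using this
    exact Fin.ext (by simpa [Fin.eta] using hv)
  · -- surjective
    rintro ⟨f, hmono, hlast⟩
    have hbound : ∀ h : (m : ℕ) - 1 < m, ∀ i : Fin (m - 1),
        ((f ⟨(i : ℕ), by omega⟩ : Fin n) : ℕ) < n - 1 := by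
      intro h i
      have : f ⟨(i : ℕ), by omega⟩ < f ⟨m - 1, h⟩ := hmono (by have h2 := i.isLt; exact Fin.mk_lt_mk.2 (by omega))
      rw [Fin.lt_def, hlast] at this
      exact this
    refine ⟨⟨fun i => ⟨(f ⟨(i : ℕ), by omega⟩ : ℕ), by have := hbound (by omega) i; omega⟩,
      fun a b hab => ?_⟩, ?_⟩
    · simp only [Fin.lt_def]
      exact hmono (show (⟨(a : ℕ), by omega⟩ : Fin m) < ⟨(b : ℕ), by omega⟩ from hab)
    · refine Subtype.ext (funext fun i => ?_)
      by_cases h : (i : ℕ) < m - 1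
      · simp only [dif_pos h]
        exact Fin.ext (by simp [Fin.eta])
      · simp only [dif_neg h]
        have hi : (i : ℕ) = m - 1 := by have := i.isLt; omega
        have : i = ⟨m - 1, by omega⟩ := Fin.ext hi
        rw [this]
        exact Fin.ext (by simpa using hlast.symm)

/-- The number of `y ∈ {0,1}^n` whose canonical embedding of `x` ends at the last
position of `y` is `C(n-1, m-1)`, independently of the form of `x`. -/
theorem maximal_initials_card (m n : ℕ) (hm : 1 ≤ m) (hmn : m ≤ n) (x : Fin m → Bool) :
    Nat.card {y : Fin n → Bool // ∃ f : Fin m → Fin n,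
        IsInitialEmbedding x y f ∧ (f ⟨m - 1, by omega⟩ : ℕ) = n - 1} =
      (n - 1).choose (m - 1) := by
  classical
  have hcov : ∀ f : Fin m → Fin n, (f ⟨m - 1, by omega⟩ : ℕ) = n - 1 →
      ∀ j : Fin n, ∃ i : Fin m, j ≤ f i := by
    intro f hl j
    refine ⟨⟨m - 1, by omega⟩, ?_⟩
    rw [Fin.le_def, hl]
    have := j.isLt; omega
  rw [← card_last_fixed m n hm hmn]
  refine (Nat.card_congr (Equiv.ofBijective
    (fun b : {f : Fin m → Fin n // StrictMono f ∧ (f ⟨m - 1, by omega⟩ : ℕ) = n - 1} =>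
      (⟨(existsUnique_y x b.1 b.2.1 (hcov b.1 b.2.2)).exists.choose,
        b.1, initial_of_gap (existsUnique_y x b.1 b.2.1 (hcov b.1 b.2.2)).exists.choose_spec.1
          (existsUnique_y x b.1 b.2.1 (hcov b.1 b.2.2)).exists.choose_spec.2, b.2.2⟩ :
        {y : Fin n → Bool // ∃ f : Fin m → Fin n,
          IsInitialEmbedding x y f ∧ (f ⟨m - 1, by omega⟩ : ℕ) = n - 1}))
    ⟨?_, ?_⟩)).symm
  · rintro ⟨f1, hm1, hl1⟩ ⟨f2, hm2, hl2⟩ hb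
    have hy := congrArg Subtype.val hb
    simp only at hy
    have e1 := (existsUnique_y x f1 hm1 (hcov f1 hl1)).exists.choose_spec
    have e2 := (existsUnique_y x f2 hm2 (hcov f2 hl2)).exists.choose_spec
    have i1 := initial_of_gap e1.1 e1.2
    have i2 := initial_of_gap e2.1 e2.2
    rw [hy] at i1
    exact Subtype.ext (initial_unique i1 i2)
  · rintro ⟨y, f, hinit, hlast⟩
    refine ⟨⟨f, hinit.1.1, hlast⟩, Subtype.ext ?_⟩
    have h := existsUnique_y x f hinit.1.1 (hcov f hlast)
    exact h.unique h.exists.choose_spec ⟨hinit.1, gap_of_initial hinit⟩
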